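/- Let f be a differentiable symmetric concave function on an open symmetric convex cone Γ ⊆ ℝⁿ. Then for any λ ∈ Γ with λ_1 ≤ λ_2 ≤ ⋯ ≤ λ_n, the partial derivatives satisfy f_1(λ) ≥ f_2(λ) ≥ ⋯ ≥ f_n(λ), and in particular f_1(λ) ≥ (1/n) ∑_{i=1}^n f_i(λ). -/

import Mathlib

open Finset Filter Topology

/-- The i-th partial derivative `f_i(x) = ∂f/∂x_i (x)`. -/
noncomputable def pd {n : ℕ} (f : (Fin n → ℝ) → ℝ) (x : Fin n → ℝ) (i : Fin n) : ℝ :=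
  fderiv ℝ f x (Pi.single i 1)

/-- The set of values `t_λ = (∑ f_i(λ) λ_i)/(∑ f_j(λ))` over the level set `∂Γ^σ`. -/
def tset {n : ℕ} (Γ : Set (Fin n → ℝ)) (f : (Fin n → ℝ) → ℝ) (σ : ℝ) : Set ℝ :=
  {t : ℝ | ∃ x ∈ Γ, f x = σ ∧ t = (∑ i, pd f x i * x i) / (∑ i, pd f x i)}

/-- The cone `Γ_{σ,f} = { t (λ - τ 𝟏) : λ ∈ ∂Γ^σ, t > 0 }`. -/
def lcone {n : ℕ} (Γ : Set (Fin n → ℝ)) (f : (Fin n → ℝ) → ℝ) (σ τ : ℝ) :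
    Set (Fin n → ℝ) :=
  {y | ∃ x ∈ Γ, f x = σ ∧ ∃ t : ℝ, 0 < t ∧ y = t • (x - fun _ => τ)}

/-- The set of `k` such that some vector with the first `k` coordinates negative and
the remaining coordinates positive belongs to `C`; `κ_C` is its greatest element. -/
def kset {n : ℕ} (C : Set (Fin n → ℝ)) : Set ℕ :=
  {k : ℕ | ∃ α : Fin n → ℝ, (∀ i, 0 < α i) ∧
    (fun i : Fin n => if (i : ℕ) < k then -α i else α i) ∈ C}

/-- Gradient inequality for a concave function along a chord with equal endpoint values. -/
lemma keyA {n : ℕ} {Γ : Set (Fin n → ℝ)} {f : (Fin n → ℝ) → ℝ}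
    (hconc : ConcaveOn ℝ Γ f) {x y : Fin n → ℝ} (hx : x ∈ Γ) (hy : y ∈ Γ)
    (hd : DifferentiableAt ℝ f x) (hfx : f y = f x) :
    0 ≤ fderiv ℝ f x (y - x) := by
  set A : ℝ →ᵃ[ℝ] (Fin n → ℝ) := AffineMap.lineMap x y with hA
  have hg : ConcaveOn ℝ (A ⁻¹' Γ) (f ∘ A) := hconc.comp_affineMap A
  have hA0 : A 0 = x := AffineMap.lineMap_apply_zero x y
  have hA1 : A 1 = y := AffineMap.lineMap_apply_one x y
  have h0 : (0 : ℝ) ∈ A ⁻¹' Γ := by simp [Set.mem_preimage, hA0, hx]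
  have h1 : (1 : ℝ) ∈ A ⁻¹' Γ := by simp [Set.mem_preimage, hA1, hy]
  have hAderiv : HasDerivAt (fun t : ℝ => A t) (y - x) 0 := by
    have : HasDerivAt (fun t : ℝ => t • (y - x) + x) ((1 : ℝ) • (y - x)) 0 :=
      ((hasDerivAt_id (0 : ℝ)).smul_const (y - x)).add_const x
    simpa [hA, AffineMap.lineMap_apply, vsub_eq_sub, vadd_eq_add, add_comm] using this
  have hfd : HasFDerivAt f (fderiv ℝ f x) (A 0) := by rw [hA0]; exact hd.hasFDerivAt
  have hderiv : HasDerivAt (f ∘ A) (fderiv ℝ f x (y - x)) 0 :=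
    hfd.comp_hasDerivAt 0 hAderiv
  have := hg.slope_le_of_hasDerivAt h0 h1 one_pos hderiv
  have hslope : slope (f ∘ A) 0 1 = 0 := by
    simp [slope_def_field, Function.comp, hA0, hA1, hfx]
  linarith [this, hslope ▸ this]

/-- Partial derivatives coincide when a swap fixes the point. -/
lemma keyB {n : ℕ} {Γ : Set (Fin n → ℝ)} {f : (Fin n → ℝ) → ℝ}
    (hopen : IsOpen Γ) (hfsym : ∀ (g : Equiv.Perm (Fin n)), ∀ x ∈ Γ, f (x ∘ g) = f x)
    {lam : Fin n → ℝ} (hlam : lam ∈ Γ) (hd : DifferentiableAt ℝ f lam)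
    (i j : Fin n) (hij : lam i = lam j) :
    pd f lam i = pd f lam j := by
  classical
  set σ : Equiv.Perm (Fin n) := Equiv.swap i j with hσ
  set L : (Fin n → ℝ) →L[ℝ] (Fin n → ℝ) :=
    ContinuousLinearMap.pi (fun k => ContinuousLinearMap.proj (σ k)) with hL
  have hLapp : ∀ x : Fin n → ℝ, L x = x ∘ σ := fun x => rfl
  have hLlam : L lam = lam := by
    funext k
    rw [hLapp]
    simp only [Function.comp_apply, hσ]
    rcases eq_or_ne k i with rfl | hki
    · simpa [Equiv.swap_apply_left] using hij.symm
    · rcases eq_or_ne k j with rfl | hkj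
      · simpa [Equiv.swap_apply_right] using hij
      · rw [Equiv.swap_apply_of_ne_of_ne hki hkj]
  have heq : (fun x => f (L x)) =ᶠ[𝓝 lam] f := by
    filter_upwards [hopen.mem_nhds hlam] with x hx
    rw [hLapp]; exact hfsym σ x hx
  have hdL : DifferentiableAt ℝ f (L lam) := by rw [hLlam]; exact hd
  have hcomp : fderiv ℝ (fun x => f (L x)) lam =
      (fderiv ℝ f (L lam)).comp L := by
    have := (hdL.hasFDerivAt.comp lam L.hasFDerivAt).fderiv
    exact this
  have hfe : fderiv ℝ (fun x => f (L x)) lam = fderiv ℝ f lam := heq.fderiv_eq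
  have key : (fderiv ℝ f lam).comp L = fderiv ℝ f lam := by
    rw [hcomp, hLlam] at hfe; exact hfe
  have hsingle : L (Pi.single i 1) = Pi.single j 1 := by
    funext k
    rw [hLapp]
    simp only [Function.comp_apply, hσ]
    rcases eq_or_ne k j with rfl | hkj
    · simp [Equiv.swap_apply_right, Pi.single_apply]
    · rcases eq_or_ne k i with rfl | hki
      · simp [Equiv.swap_apply_left, Pi.single_apply, (Ne.symm hkj)]
      · rw [Equiv.swap_apply_of_ne_of_ne hki hkj]
        simp [Pi.single_apply, hki, hkj]
  have h1 := ContinuousLinearMap.ext_iff.mp key (Pi.single i 1)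
  rw [pd, pd, ← h1]
  show fderiv ℝ f lam (L (Pi.single i 1)) = _
  rw [hsingle]
theorem stmt17 {n : ℕ} (hn : 0 < n) (Γ : Set (Fin n → ℝ)) (f : (Fin n → ℝ) → ℝ)
    (hopen : IsOpen Γ) (hconv : Convex ℝ Γ)
    (hcone : ∀ x ∈ Γ, ∀ t : ℝ, 0 < t → t • x ∈ Γ)
    (hΓsym : ∀ (g : Equiv.Perm (Fin n)), ∀ x ∈ Γ, x ∘ g ∈ Γ)
    (hfsym : ∀ (g : Equiv.Perm (Fin n)), ∀ x ∈ Γ, f (x ∘ g) = f x)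
    (hconc : ConcaveOn ℝ Γ f)
    (hdiff : ∀ x ∈ Γ, DifferentiableAt ℝ f x)
    (lam : Fin n → ℝ) (hlam : lam ∈ Γ)
    (hsort : ∀ i j : Fin n, i ≤ j → lam i ≤ lam j) :
    (∀ i j : Fin n, i ≤ j → pd f lam j ≤ pd f lam i) ∧
    (1 / (n : ℝ)) * ∑ i, pd f lam i ≤ pd f lam ⟨0, hn⟩ := by
  classical
  have hmono : ∀ i j : Fin n, i ≤ j → pd f lam j ≤ pd f lam i := by
    intro i j hij
    rcases eq_or_lt_of_le (hsort i j hij) with heq | hlt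
    · exact (keyB hopen hfsym hlam (hdiff lam hlam) i j heq).symm.le
    · have hne : i ≠ j := by
        intro h; rw [h] at hlt; exact lt_irrefl _ hlt
      set y : Fin n → ℝ := lam ∘ Equiv.swap i j with hy
      have hyΓ : y ∈ Γ := hΓsym (Equiv.swap i j) lam hlam
      have hfy : f y = f lam := hfsym (Equiv.swap i j) lam hlam
      have hineq := keyA hconc hlam hyΓ (hdiff lam hlam) hfy
      have hyx : y - lam = (lam j - lam i) • (Pi.single i 1 - Pi.single j 1) := by
        funext k
        simp only [Pi.sub_apply, Pi.smul_apply, smul_eq_mul, hy, Function.comp_apply]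
        rcases eq_or_ne k i with rfl | hki
        · simp [Equiv.swap_apply_left, Pi.single_apply, hne]
        · rcases eq_or_ne k j with rfl | hkj
          · simp [Equiv.swap_apply_right, Pi.single_apply, Ne.symm hne]
          · rw [Equiv.swap_apply_of_ne_of_ne hki hkj]
            simp [Pi.single_apply, hki, hkj]
      rw [hyx] at hineq
      rw [map_smul, map_sub] at hineq
      have hpos : (0 : ℝ) < lam j - lam i := sub_pos.mpr hlt
      have hineq' : 0 ≤ (lam j - lam i) * (pd f lam i - pd f lam j) := by
        simpa [pd, smul_eq_mul] using hineq
      nlinarith [hineq', hpos]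
  refine ⟨hmono, ?_⟩
  have hle : ∀ i : Fin n, pd f lam i ≤ pd f lam ⟨0, hn⟩ := by
    intro i
    exact hmono ⟨0, hn⟩ i (by simp [Fin.le_def])
  have hsum : ∑ i, pd f lam i ≤ (n : ℝ) * pd f lam ⟨0, hn⟩ := by
    calc ∑ i, pd f lam i ≤ ∑ _i : Fin n, pd f lam ⟨0, hn⟩ :=
          Finset.sum_le_sum (fun i _ => hle i)
      _ = (n : ℝ) * pd f lam ⟨0, hn⟩ := by
          simp [Finset.sum_const, Finset.card_univ, nsmul_eq_mul]
  have hn' : (0 : ℝ) < n := Nat.cast_pos.mpr hn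
  calc (1 / (n : ℝ)) * ∑ i, pd f lam i
      ≤ (1 / (n : ℝ)) * ((n : ℝ) * pd f lam ⟨0, hn⟩) := by
        apply mul_le_mul_of_nonneg_left hsum (by positivity)
    _ = pd f lam ⟨0, hn⟩ := by field_simp
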